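/- If X and Y are finite simplicial complexes and X is collapsible, then the join X * Y is collapsible. -/
import Mathlib


open Finset

attribute [local instance] Classical.propDecidable

noncomputable section

universe u v

/-- A finite abstract simplicial complex: a finite collection of nonempty finite sets
closed under taking nonempty subsets. -/
def IsComplex {V : Type u} (X : Finset (Finset V)) : Prop :=
  (∀ s ∈ X, s.Nonempty) ∧ ∀ s ∈ X, ∀ t : Finset V, t ⊆ s → t.Nonempty → t ∈ X

/-- `s` is a maximal simplex (facet) of `X`. -/
def IsFacet {V : Type u} (X : Finset (Finset V)) (s : Finset V) : Prop :=
  s ∈ X ∧ ∀ t ∈ X, s ⊆ t → t = s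

/-- An elementary collapse: `σ` is a free face of `X` whose unique maximal coface is `τ`,
and `Y` results from removing all simplices containing `σ`. -/
def ElemCollapse {V : Type u} (X Y : Finset (Finset V)) : Prop :=
  ∃ σ τ : Finset V, σ ∈ X ∧ IsFacet X τ ∧ σ ⊂ τ ∧
    (∀ t ∈ X, σ ⊆ t → t ⊆ τ) ∧ Y = X.filter (fun s => ¬ σ ⊆ s)

/-- `X` simplicially collapses onto `Y`. -/
def Collapses {V : Type u} (X Y : Finset (Finset V)) : Prop :=
  Relation.ReflTransGen ElemCollapse X Y

/-- `X` is collapsible: it collapses to a single vertex. -/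
def Collapsible {V : Type u} (X : Finset (Finset V)) : Prop :=
  ∃ v : V, Collapses X {{v}}

/-- The vertex `v` is dominated by the vertex `w ≠ v`: every facet containing `v`
contains `w`. -/
def Dominated {V : Type u} (X : Finset (Finset V)) (v w : V) : Prop :=
  w ≠ v ∧ ∀ s : Finset V, IsFacet X s → v ∈ s → w ∈ s

/-- An elementary strong collapse: deletion of a dominated vertex. -/
def ElemStrongCollapse {V : Type u} (X Y : Finset (Finset V)) : Prop :=
  ∃ v w : V, {v} ∈ X ∧ Dominated X v w ∧ Y = X.filter (fun s => v ∉ s)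

/-- `X` strongly collapses onto `Y`. -/
def StrongCollapses {V : Type u} (X Y : Finset (Finset V)) : Prop :=
  Relation.ReflTransGen ElemStrongCollapse X Y

/-- `X` is strongly collapsible: it strongly collapses to a single vertex. -/
def StrongCollapsible {V : Type u} (X : Finset (Finset V)) : Prop :=
  ∃ v : V, StrongCollapses X {{v}}

/-- The set of vertices of a complex. -/
def vertexSet {V : Type u} (X : Finset (Finset V)) : Finset V := X.sup id

/-- The link of a simplex `σ` in `X`. -/
def linkC {V : Type u} (X : Finset (Finset V)) (σ : Finset V) : Finset (Finset V) :=
  X.filter (fun η => Disjoint η σ ∧ η ∪ σ ∈ X)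

/-- The face-deletion of `σ` in `X`. -/
def faceDeletion {V : Type u} (X : Finset (Finset V)) (σ : Finset V) : Finset (Finset V) :=
  X.filter (fun η => ¬ σ ⊆ η)

/-- The simplicial join of two complexes (on disjoint vertex sets, via `Sum`). -/
def joinC {A : Type u} {B : Type v} (X : Finset (Finset A)) (Y : Finset (Finset B)) :
    Finset (Finset (A ⊕ B)) :=
  (((insert (∅ : Finset A) X) ×ˢ (insert (∅ : Finset B) Y)).image
      (fun p => p.1.image Sum.inl ∪ p.2.image Sum.inr)).filter (·.Nonempty)

/-- The flag (clique) complex on the admissible vertices (those satisfying `P`) of a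
finite type, with respect to a (reflexive, symmetric) compatibility relation `R`:
simplices are the nonempty finite sets of admissible vertices that are pairwise
compatible. -/
def cliqueComplex {A : Type u} [Fintype A] (P : A → Prop) (R : A → A → Prop) :
    Finset (Finset A) :=
  Finset.univ.filter (fun s : Finset A =>
    s.Nonempty ∧ (∀ a ∈ s, P a) ∧ ∀ a ∈ s, ∀ b ∈ s, R a b)

/-- A complex is a cone if some vertex lies in every maximal simplex. -/
def IsCone {A : Type u} (X : Finset (Finset A)) : Prop :=
  ∃ v : A, {v} ∈ X ∧ ∀ s, IsFacet X s → v ∈ s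

/-- Simplicial isomorphism (onto): `Y` is the image of `X` under an injection of
vertices. -/
def Isom {A : Type u} {B : Type v} (X : Finset (Finset A)) (Y : Finset (Finset B)) : Prop :=
  ∃ f : A → B, Function.Injective f ∧ Y = X.image (fun s => s.image f)

namespace Stmt0Aux

variable {V : Type u} {A : Type u} {B : Type v}

/-- The A-part of a finset of `A ⊕ B`. -/
def pA (s : Finset (A ⊕ B)) : Finset A := s.preimage Sum.inl Sum.inl_injective.injOn

/-- The B-part of a finset of `A ⊕ B`. -/
def pB (s : Finset (A ⊕ B)) : Finset B := s.preimage Sum.inr Sum.inr_injective.injOn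

lemma mem_pA {s : Finset (A ⊕ B)} {a : A} : a ∈ pA s ↔ Sum.inl a ∈ s :=
  Finset.mem_preimage

lemma mem_pB {s : Finset (A ⊕ B)} {b : B} : b ∈ pB s ↔ Sum.inr b ∈ s :=
  Finset.mem_preimage

lemma decomp (s : Finset (A ⊕ B)) :
    (pA s).image Sum.inl ∪ (pB s).image Sum.inr = s := by
  ext x
  cases x <;> simp [mem_pA, mem_pB]

lemma pA_union_image (a : Finset A) (b : Finset B) :
    pA (a.image Sum.inl ∪ b.image Sum.inr) = a := by
  ext x; simp [mem_pA]

lemma pB_union_image (a : Finset A) (b : Finset B) :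
    pB (a.image Sum.inl ∪ b.image Sum.inr) = b := by
  ext x; simp [mem_pB]

lemma pA_mono {s t : Finset (A ⊕ B)} (h : s ⊆ t) : pA s ⊆ pA t := by
  intro x hx; exact mem_pA.2 (h (mem_pA.1 hx))

lemma pB_mono {s t : Finset (A ⊕ B)} (h : s ⊆ t) : pB s ⊆ pB t := by
  intro x hx; exact mem_pB.2 (h (mem_pB.1 hx))

lemma union_image_subset_iff {a : Finset A} {b : Finset B} {s : Finset (A ⊕ B)} :
    a.image Sum.inl ∪ b.image Sum.inr ⊆ s ↔ a ⊆ pA s ∧ b ⊆ pB s := by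
  constructor
  · intro h
    refine ⟨fun x hx => mem_pA.2 (h ?_), fun x hx => mem_pB.2 (h ?_)⟩ <;>
      simp [Finset.mem_union, hx]
  · rintro ⟨h1, h2⟩ x hx
    rcases Finset.mem_union.1 hx with hx | hx
    · obtain ⟨y, hy, rfl⟩ := Finset.mem_image.1 hx
      exact mem_pA.1 (h1 hy)
    · obtain ⟨y, hy, rfl⟩ := Finset.mem_image.1 hx
      exact mem_pB.1 (h2 hy)

lemma mem_joinC {X : Finset (Finset A)} {Y : Finset (Finset B)} {s : Finset (A ⊕ B)} :
    s ∈ joinC X Y ↔ pA s ∈ insert ∅ X ∧ pB s ∈ insert ∅ Y ∧ s.Nonempty := by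
  unfold joinC
  simp only [Finset.mem_filter, Finset.mem_image, Finset.mem_product, Prod.exists]
  constructor
  · rintro ⟨⟨p, q, ⟨h1, h2⟩, rfl⟩, hne⟩
    rw [pA_union_image, pB_union_image]
    exact ⟨h1, h2, hne⟩
  · rintro ⟨h1, h2, h3⟩
    exact ⟨⟨pA s, pB s, ⟨h1, h2⟩, decomp s⟩, h3⟩

lemma isComplex_filter {X : Finset (Finset V)} (hX : IsComplex X) (σ : Finset V) :
    IsComplex (X.filter (fun s => ¬ σ ⊆ s)) := by
  constructor
  · intro s hs; exact hX.1 s (Finset.mem_filter.1 hs).1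
  · intro s hs t hts htne
    obtain ⟨hsX, hns⟩ := Finset.mem_filter.1 hs
    exact Finset.mem_filter.2 ⟨hX.2 s hsX t hts htne, fun hst => hns (hst.trans hts)⟩

lemma isComplex_of_elemCollapse {X Y : Finset (Finset V)} (hX : IsComplex X)
    (h : ElemCollapse X Y) : IsComplex Y := by
  obtain ⟨σ, τ, _, _, _, _, rfl⟩ := h
  exact isComplex_filter hX σ

/-- A cone (every simplex stays a simplex after inserting the apex) is collapsible. -/
lemma cone_collapses (w : V) :
    ∀ n (Z : Finset (Finset V)), Z.card ≤ n → IsComplex Z → {w} ∈ Z →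
      (∀ s ∈ Z, insert w s ∈ Z) → Collapses Z {{w}} := by
  intro n
  induction n with
  | zero =>
    intro Z hcard _ hw _
    exact absurd (Finset.card_pos.2 ⟨{w}, hw⟩) (by omega)
  | succ n ih =>
    intro Z hcard hZ hw hcone
    by_cases hall : ∀ s ∈ Z, w ∈ s
    · -- then Z = {{w}}
      have : Z = {{w}} := by
        apply Finset.eq_singleton_iff_unique_mem.2
        refine ⟨hw, fun s hs => ?_⟩
        by_contra hne
        have hsub : s ⊆ {w} := by
          by_contra hsub
          obtain ⟨x, hx, hxw⟩ := Finset.not_subset.1 hsub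
          have hxne : x ≠ w := by simpa using hxw
          have hse : (s.erase w).Nonempty := ⟨x, Finset.mem_erase.2 ⟨hxne, hx⟩⟩
          have := hall _ (hZ.2 s hs (s.erase w) (Finset.erase_subset _ _) hse)
          simp at this
        have : s = {w} :=
          Finset.Nonempty.subset_singleton_iff (hZ.1 s hs) |>.1 hsub
        exact hne this
      rw [this]
      exact Relation.ReflTransGen.refl
    · push_neg at hall
      -- pick a maximal-cardinality simplex not containing w
      have hne : (Z.filter (fun s => w ∉ s)).Nonempty := by
        obtain ⟨s, hs, hws⟩ := hall
        exact ⟨s, Finset.mem_filter.2 ⟨hs, hws⟩⟩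
      obtain ⟨s, hsmem, hsmax⟩ := (Z.filter (fun s => w ∉ s)).exists_max_image
        Finset.card hne
      obtain ⟨hsZ, hws⟩ := Finset.mem_filter.1 hsmem
      have hsne : s.Nonempty := hZ.1 s hsZ
      -- every t ∈ Z containing s equals s or insert w s
      have hkey : ∀ t ∈ Z, s ⊆ t → t = s ∨ t = insert w s := by
        intro t htZ hst
        by_cases hwt : w ∈ t
        · right
          have hse : s ⊆ t.erase w := fun x hx =>
            Finset.mem_erase.2 ⟨fun he => hws (he ▸ hx), hst hx⟩
          have heZ : t.erase w ∈ Z :=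
            hZ.2 t htZ _ (Finset.erase_subset _ _) (hsne.mono hse)
          have hle : (t.erase w).card ≤ s.card :=
            hsmax _ (Finset.mem_filter.2 ⟨heZ, Finset.notMem_erase _ _⟩)
          have hes : t.erase w = s := (Finset.eq_of_subset_of_card_le hse hle).symm
          have : t ⊆ insert w s := by
            intro x hx
            by_cases hxw : x = w
            · simp [hxw]
            · exact Finset.mem_insert.2 (Or.inr (hes ▸ Finset.mem_erase.2 ⟨hxw, hx⟩))
          exact Finset.Subset.antisymm this
            (Finset.insert_subset hwt (hst.trans (Finset.Subset.refl t)))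
        · left
          have hle : t.card ≤ s.card := hsmax _ (Finset.mem_filter.2 ⟨htZ, hwt⟩)
          exact (Finset.eq_of_subset_of_card_le hst hle).symm
      have hiwZ : insert w s ∈ Z := hcone s hsZ
      have hcol : ElemCollapse Z (Z.filter (fun t => ¬ s ⊆ t)) := by
        refine ⟨s, insert w s, hsZ, ⟨hiwZ, ?_⟩, Finset.ssubset_insert hws, ?_, rfl⟩
        · intro t htZ hsub
          rcases hkey t htZ ((Finset.subset_insert w s).trans hsub) with h | h
          · exact absurd (h ▸ hsub (Finset.mem_insert_self w s)) hws
          · exact h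
        · intro t htZ hst
          rcases hkey t htZ hst with h | h
          · exact h ▸ Finset.subset_insert w s
          · exact h ▸ Finset.Subset.refl _
      set Z' := Z.filter (fun t => ¬ s ⊆ t) with hZ'def
      have hsnot : s ∉ Z' := by simp [hZ'def]
      have hcard' : Z'.card ≤ n := by
        have : Z' ⊂ Z := Finset.ssubset_iff_of_subset (Finset.filter_subset _ _)
          |>.2 ⟨s, hsZ, hsnot⟩
        have := Finset.card_lt_card this
        omega
      have hwZ' : {w} ∈ Z' := by
        refine Finset.mem_filter.2 ⟨hw, fun hsub => ?_⟩
        have : s = {w} := Finset.Nonempty.subset_singleton_iff hsne |>.1 hsub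
        exact hws (this ▸ Finset.mem_singleton_self w)
      have hconeZ' : ∀ t ∈ Z', insert w t ∈ Z' := by
        intro t htZ'
        obtain ⟨htZ, hnst⟩ := Finset.mem_filter.1 htZ'
        refine Finset.mem_filter.2 ⟨hcone t htZ, fun hsub => ?_⟩
        refine hnst (fun x hx => ?_)
        rcases Finset.mem_insert.1 (hsub hx) with rfl | hxt
        · exact absurd hx hws
        · exact hxt
      exact Relation.ReflTransGen.head hcol
        (ih Z' hcard' (isComplex_of_elemCollapse hZ hcol) hwZ' hconeZ')

/-- Key step: an elementary collapse of `X` induces a collapse of the join. -/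
lemma join_step {X X' : Finset (Finset A)} (Y : Finset (Finset B)) (hX : IsComplex X)
    (h : ElemCollapse X X') : Collapses (joinC X Y) (joinC X' Y) := by
  obtain ⟨σ, τ, hσX, ⟨hτX, hτmax⟩, hστ, hfree, rfl⟩ := h
  have hσne : σ.Nonempty := hX.1 σ hσX
  have hτne : τ.Nonempty := hX.1 τ hτX
  set T : Finset (Finset B) := insert ∅ Y with hTdef
  set Z : Finset (Finset B) → Finset (Finset (A ⊕ B)) :=
    fun E => (joinC X Y).filter (fun s => ¬ (σ ⊆ pA s ∧ pB s ∈ E)) with hZdef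
  -- main chain
  have main : ∀ n (E : Finset (Finset B)), (T \ E).card ≤ n → E ⊆ T →
      Collapses (Z E) (Z T) := by
    intro n
    induction n with
    | zero =>
      intro E hcard hET
      have : T \ E = ∅ := Finset.card_eq_zero.1 (Nat.le_zero.1 hcard)
      have hTE : T ⊆ E := fun x hx => by
        by_contra hxE
        exact absurd (Finset.mem_sdiff.2 ⟨hx, hxE⟩) (by simp [this])
      rw [Finset.Subset.antisymm hET hTE]
      exact Relation.ReflTransGen.refl
    | succ n ih =>
      intro E hcard hET
      by_cases hTE : T ⊆ E
      · rw [Finset.Subset.antisymm hET hTE]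
        exact Relation.ReflTransGen.refl
      · have hne : (T \ E).Nonempty := by
          obtain ⟨x, hx, hxE⟩ := Finset.not_subset.1 hTE
          exact ⟨x, Finset.mem_sdiff.2 ⟨hx, hxE⟩⟩
        obtain ⟨η, hηmem, hηmax⟩ := (T \ E).exists_max_image Finset.card hne
        obtain ⟨hηT, hηE⟩ := Finset.mem_sdiff.1 hηmem
        -- anything in T strictly above η is in E
        have hup : ∀ η' ∈ T, η ⊂ η' → η' ∈ E := by
          intro η' hη'T hlt
          by_contra hη'E
          have := hηmax η' (Finset.mem_sdiff.2 ⟨hη'T, hη'E⟩)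
          exact absurd (Finset.card_lt_card hlt) (by omega)
        set σf : Finset (A ⊕ B) := σ.image Sum.inl ∪ η.image Sum.inr with hσf
        set τf : Finset (A ⊕ B) := τ.image Sum.inl ∪ η.image Sum.inr with hτf
        have hpAσf : pA σf = σ := pA_union_image σ η
        have hpBσf : pB σf = η := pB_union_image σ η
        have hpAτf : pA τf = τ := pA_union_image τ η
        have hpBτf : pB τf = η := pB_union_image τ η
        have hσfJ : σf ∈ joinC X Y := by
          rw [mem_joinC, hpAσf, hpBσf]
          exact ⟨Finset.mem_insert_of_mem hσX, hηT, by
            obtain ⟨a, ha⟩ := hσne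
            exact ⟨Sum.inl a, by simp [hσf, ha]⟩⟩
        have hτfJ : τf ∈ joinC X Y := by
          rw [mem_joinC, hpAτf, hpBτf]
          exact ⟨Finset.mem_insert_of_mem hτX, hηT, by
            obtain ⟨a, ha⟩ := hτne
            exact ⟨Sum.inl a, by simp [hτf, ha]⟩⟩
        have hσfZ : σf ∈ Z E := by
          refine Finset.mem_filter.2 ⟨hσfJ, ?_⟩
          rw [hpBσf]; exact fun hc => hηE hc.2
        have hτfZ : τf ∈ Z E := by
          refine Finset.mem_filter.2 ⟨hτfJ, ?_⟩
          rw [hpBτf]; exact fun hc => hηE hc.2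
        -- analysis of members of Z E containing σf
        have hanal : ∀ t ∈ Z E, σ ⊆ pA t → η ⊆ pB t → pA t ∈ X ∧ pA t ⊆ τ ∧ pB t = η := by
          intro t htZ hσt hηt
          obtain ⟨htJ, htf⟩ := Finset.mem_filter.1 htZ
          obtain ⟨hpAt, hpBt, _⟩ := mem_joinC.1 htJ
          have hpAtX : pA t ∈ X := by
            rcases Finset.mem_insert.1 hpAt with he | hX'
            · exact absurd (he ▸ hσt) (by
                intro hc
                exact absurd (hc.antisymm (Finset.empty_subset σ)) hσne.ne_empty)
            · exact hX'
          have hpBtE : pB t ∉ E := fun hc => htf ⟨hσt, hc⟩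
          have hpBtη : pB t = η := by
            by_contra hc
            exact hpBtE (hup _ hpBt (Finset.ssubset_iff_of_subset hηt |>.2
              (by
                obtain ⟨x, hx, hxη⟩ := Finset.not_subset.1 (fun hs => hc
                  (Finset.Subset.antisymm hs hηt))
                exact ⟨x, hx, hxη⟩)))
          exact ⟨hpAtX, hfree _ hpAtX hσt, hpBtη⟩
        have hcol : ElemCollapse (Z E) (Z (insert η E)) := by
          refine ⟨σf, τf, hσfZ, ⟨hτfZ, ?_⟩, ?_, ?_, ?_⟩
          · -- τf is a facet of Z E
            intro t htZ hτft
            obtain ⟨hτt, hηt⟩ := union_image_subset_iff.1 (hτf ▸ hτft)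
            have hσt : σ ⊆ pA t := hστ.subset.trans hτt
            obtain ⟨hpAtX, _, hpBtη⟩ := hanal t htZ hσt hηt
            have hpAtτ : pA t = τ := hτmax _ hpAtX hτt
            calc t = (pA t).image Sum.inl ∪ (pB t).image Sum.inr := (decomp t).symm
              _ = τf := by rw [hpAtτ, hpBtη]
          · -- σf ⊂ τf
            refine Finset.ssubset_iff_of_subset ?_ |>.2 ?_
            · exact Finset.union_subset_union
                (Finset.image_subset_image hστ.subset) (Finset.Subset.refl _)
            · obtain ⟨a, haτ, haσ⟩ := Finset.exists_of_ssubset hστ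
              refine ⟨Sum.inl a, by simp [hτf, haτ], ?_⟩
              simp [hσf, haσ]
          · -- everything containing σf lies in τf
            intro t htZ hσft
            obtain ⟨hσt, hηt⟩ := union_image_subset_iff.1 (hσf ▸ hσft)
            obtain ⟨_, hpAtτ, hpBtη⟩ := hanal t htZ hσt hηt
            calc t = (pA t).image Sum.inl ∪ (pB t).image Sum.inr := (decomp t).symm
              _ ⊆ τf := Finset.union_subset_union (Finset.image_subset_image hpAtτ)
                  (by rw [hpBtη])
          · -- the filtered complex is Z (insert η E)
            ext s
            simp only [hZdef, Finset.mem_filter, Finset.mem_insert]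
            constructor
            · rintro ⟨hsJ, hf⟩
              refine ⟨⟨hsJ, fun hc => hf ⟨hc.1, Or.inr hc.2⟩⟩, fun hc => ?_⟩
              obtain ⟨hσs, hηs⟩ := union_image_subset_iff.1 (hσf ▸ hc)
              obtain ⟨_, hpBs, _⟩ := mem_joinC.1 hsJ
              by_cases he : pB s = η
              · exact hf ⟨hσs, Or.inl he⟩
              · exact hf ⟨hσs, Or.inr (hup _ hpBs (Finset.ssubset_iff_of_subset hηs
                  |>.2 (by
                    obtain ⟨x, hx, hxη⟩ := Finset.not_subset.1 (fun hs' => he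
                      (Finset.Subset.antisymm hs' hηs))
                    exact ⟨x, hx, hxη⟩)))⟩
            · rintro ⟨⟨hsJ, hf1⟩, hf2⟩
              refine ⟨hsJ, ?_⟩
              rintro ⟨hσs, he | hE⟩
              · exact hf2 (hσf ▸ union_image_subset_iff.2 ⟨hσs, by rw [he]⟩)
              · exact hf1 ⟨hσs, hE⟩
        have hcard' : (T \ insert η E).card ≤ n := by
          have hsub : T \ insert η E ⊂ T \ E := by
            refine Finset.ssubset_iff_of_subset ?_ |>.2 ⟨η, hηmem, by simp⟩
            intro x hx
            obtain ⟨hxT, hxE⟩ := Finset.mem_sdiff.1 hx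
            exact Finset.mem_sdiff.2 ⟨hxT, fun hc => hxE (Finset.mem_insert_of_mem hc)⟩
          have := Finset.card_lt_card hsub
          omega
        exact Relation.ReflTransGen.head hcol
          (ih (insert η E) hcard' (Finset.insert_subset hηT hET))
  have hstart : Z ∅ = joinC X Y := by
    simp [hZdef]
  have hend : Z T = joinC (X.filter (fun s => ¬ σ ⊆ s)) Y := by
    ext s
    simp only [hZdef, Finset.mem_filter]
    rw [mem_joinC, mem_joinC]
    constructor
    · rintro ⟨⟨h1, h2, h3⟩, hf⟩
      refine ⟨?_, h2, h3⟩
      rcases Finset.mem_insert.1 h1 with he | hXm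
      · exact he ▸ Finset.mem_insert_self _ _
      · exact Finset.mem_insert_of_mem (Finset.mem_filter.2 ⟨hXm, fun hc => hf ⟨hc, h2⟩⟩)
    · rintro ⟨h1, h2, h3⟩
      rcases Finset.mem_insert.1 h1 with he | hXm
      · refine ⟨⟨he ▸ Finset.mem_insert_self _ _, h2, h3⟩, ?_⟩
        rintro ⟨hc, _⟩
        rw [he] at hc
        exact hσne.ne_empty (hc.antisymm (Finset.empty_subset σ))
      · obtain ⟨hXm', hns⟩ := Finset.mem_filter.1 hXm
        exact ⟨⟨Finset.mem_insert_of_mem hXm', h2, h3⟩, fun hc => hns hc.1⟩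
  have := main (T \ ∅).card ∅ (le_refl _) (Finset.empty_subset T)
  rw [hstart, hend] at this
  exact this

lemma isComplex_joinC {X : Finset (Finset A)} {Y : Finset (Finset B)}
    (hX : IsComplex X) (hY : IsComplex Y) : IsComplex (joinC X Y) := by
  constructor
  · intro s hs; exact (mem_joinC.1 hs).2.2
  · intro s hs t hts htne
    obtain ⟨h1, h2, _⟩ := mem_joinC.1 hs
    rw [mem_joinC]
    refine ⟨?_, ?_, htne⟩
    · rcases Finset.eq_empty_or_nonempty (pA t) with he | hne
      · exact he ▸ Finset.mem_insert_self _ _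
      · have hsub : pA t ⊆ pA s := pA_mono hts
        have : pA s ∈ X := by
          rcases Finset.mem_insert.1 h1 with he' | hm
          · exact absurd (he' ▸ hsub) (by
              intro hc
              exact hne.ne_empty (hc.antisymm (Finset.empty_subset _)))
          · exact hm
        exact Finset.mem_insert_of_mem (hX.2 _ this _ hsub hne)
    · rcases Finset.eq_empty_or_nonempty (pB t) with he | hne
      · exact he ▸ Finset.mem_insert_self _ _
      · have hsub : pB t ⊆ pB s := pB_mono hts
        have : pB s ∈ Y := by
          rcases Finset.mem_insert.1 h2 with he' | hm
          · exact absurd (he' ▸ hsub) (by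
              intro hc
              exact hne.ne_empty (hc.antisymm (Finset.empty_subset _)))
          · exact hm
        exact Finset.mem_insert_of_mem (hY.2 _ this _ hsub hne)

lemma pA_insert_inl {inst1 : DecidableEq (A ⊕ B)} {inst2 : DecidableEq A} (a : A)
    (s : Finset (A ⊕ B)) :
    pA (@insert _ _ (@Finset.instInsert _ inst1) (Sum.inl a) s)
      = @insert _ _ (@Finset.instInsert _ inst2) a (pA s) := by
  ext x; simp [mem_pA]

lemma pB_insert_inl {inst1 : DecidableEq (A ⊕ B)} (a : A) (s : Finset (A ⊕ B)) :
    pB (@insert _ _ (@Finset.instInsert _ inst1) (Sum.inl a) s) = pB s := by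
  ext x; simp [mem_pB]

end Stmt0Aux

/-- Welker. If `X` and `Y` are finite simplicial complexes and `X` is
collapsible, then the join `X * Y` is collapsible. -/
theorem stmt0 {A : Type u} {B : Type v} (X : Finset (Finset A)) (Y : Finset (Finset B))
    (hX : IsComplex X) (hY : IsComplex Y) (h : Collapsible X) :
    Collapsible (joinC X Y) := by
  obtain ⟨v, hcol⟩ := h
  open Stmt0Aux in
  -- Step 1: joinC X Y collapses to joinC {{v}} Y
  have step1 : ∀ X₀ : Finset (Finset A), Collapses X₀ {{v}} → IsComplex X₀ →
      Collapses (joinC X₀ Y) (joinC {{v}} Y) := by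
    intro X₀ hc
    induction hc using Relation.ReflTransGen.head_induction_on with
    | refl => intro _; exact Relation.ReflTransGen.refl
    | head hstep _ ih =>
      intro hcomp
      exact (Stmt0Aux.join_step Y hcomp hstep).trans
        (ih (Stmt0Aux.isComplex_of_elemCollapse hcomp hstep))
  have h1 : Collapses (joinC X Y) (joinC {{v}} Y) := step1 X hcol hX
  -- Step 2: joinC {{v}} Y is a cone with apex Sum.inl v, hence collapsible
  have hvcomplex : IsComplex ({{v}} : Finset (Finset A)) := by
    constructor
    · intro s hs
      rw [Finset.mem_singleton] at hs
      exact hs ▸ Finset.singleton_nonempty v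
    · intro s hs t hts htne
      rw [Finset.mem_singleton] at hs ⊢
      subst hs
      exact (Finset.Nonempty.subset_singleton_iff htne).1 hts
  have hJcomplex : IsComplex (joinC ({{v}} : Finset (Finset A)) Y) :=
    Stmt0Aux.isComplex_joinC hvcomplex hY
  have hvmem : ({Sum.inl v} : Finset (A ⊕ B)) ∈ joinC ({{v}} : Finset (Finset A)) Y := by
    rw [Stmt0Aux.mem_joinC]
    refine ⟨?_, ?_, Finset.singleton_nonempty _⟩
    · have : Stmt0Aux.pA ({Sum.inl v} : Finset (A ⊕ B)) = {v} := by
        ext x; simp [Stmt0Aux.mem_pA]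
      rw [this]; simp
    · have : Stmt0Aux.pB ({Sum.inl v} : Finset (A ⊕ B)) = (∅ : Finset B) := by
        ext x; simp [Stmt0Aux.mem_pB]
      rw [this]; simp
  have h2 : Collapses (joinC ({{v}} : Finset (Finset A)) Y) {{Sum.inl v}} := by
    refine Stmt0Aux.cone_collapses (Sum.inl v) _ _ (le_refl _) hJcomplex hvmem
      fun s hs => ?_
    obtain ⟨h1, h2, h3⟩ := Stmt0Aux.mem_joinC.1 hs
    rw [Stmt0Aux.mem_joinC,
      Stmt0Aux.pA_insert_inl (inst2 := fun a b => Classical.propDecidable (a = b)),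
      Stmt0Aux.pB_insert_inl]
    refine ⟨?_, h2, ⟨Sum.inl v, @Finset.mem_insert_self _ (fun a b => Classical.propDecidable (a = b)) _ _⟩⟩
    rcases Finset.mem_insert.1 h1 with he | hm
    · rw [he]; simp
    · rw [Finset.mem_singleton] at hm
      rw [hm]; simp
  exact ⟨Sum.inl v, h1.trans h2⟩
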